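/- Let O be an integral domain admitting a constrained filtration and let a ∈ O with a ≠ 0. Then the subring O[a⁻¹] of the fraction field of O generated by O together with the inverse a⁻¹ admits a constrained filtration. -/

import Mathlib

/-- A constrained filtration of a ring `O`: an increasing chain `(Oₙ)` of finite
nonempty subsets such that (CF0) `⋃ₙ Oₙ = O`; (CF1) there is `k` with
`Oₙ + Oₙ ⊆ O_{n+k}` for all `n`; (CF2) for every `a ∈ O` there is `k` with
`a·Oₙ ⊆ O_{n+k}` for all `n`; (CF3) for every `ε > 0` there is `C_ε > 0` with
`|O_{n+1}| ≤ C_ε·|Oₙ|^(1+ε)` for all `n`. -/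
def IsConstrainedFiltration (O : Type*) [Ring O] (F : ℕ → Set O) : Prop :=
  (∀ n, (F n).Finite ∧ (F n).Nonempty) ∧
  (∀ n, F n ⊆ F (n + 1)) ∧
  (∀ x : O, ∃ n, x ∈ F n) ∧
  (∃ k : ℕ, ∀ n, ∀ x ∈ F n, ∀ y ∈ F n, x + y ∈ F (n + k)) ∧
  (∀ a : O, ∃ k : ℕ, ∀ n, ∀ x ∈ F n, a * x ∈ F (n + k)) ∧
  (∀ ε : ℝ, 0 < ε → ∃ C : ℝ, 0 < C ∧
    ∀ n, ((F (n + 1)).ncard : ℝ) ≤ C * ((F n).ncard : ℝ) ^ ((1 : ℝ) + ε))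

/-- A ring is constrainedly filtered if it admits a constrained filtration. -/
def ConstrainedlyFiltered (O : Type*) [Ring O] : Prop :=
  ∃ F : ℕ → Set O, IsConstrainedFiltration O F

private lemma filt_mono_aux {O : Type*} {F : ℕ → Set O}
    (hmono : ∀ n, F n ⊆ F (n + 1)) : ∀ {m n : ℕ}, m ≤ n → F m ⊆ F n := by
  intro m n hmn
  induction hmn with
  | refl => exact subset_rfl
  | step _ ih => exact ih.trans (hmono _)

private lemma card_iter_aux {c : ℕ → ℝ} (h1 : ∀ n, 1 ≤ c n)
    (hcard : ∀ ε : ℝ, 0 < ε → ∃ C : ℝ, 0 < C ∧ ∀ n, c (n + 1) ≤ C * c n ^ ((1:ℝ) + ε)) :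
    ∀ (k : ℕ) (ε : ℝ), 0 < ε → ∃ C : ℝ, 0 < C ∧
      ∀ n, c (n + k) ≤ C * c n ^ ((1:ℝ) + ε) := by
  intro k
  induction k with
  | zero =>
    intro ε hε
    refine ⟨1, one_pos, fun n => ?_⟩
    rw [one_mul]
    calc c n = c n ^ (1:ℝ) := (Real.rpow_one _).symm
    _ ≤ c n ^ ((1:ℝ) + ε) := Real.rpow_le_rpow_of_exponent_le (h1 n) (by linarith)
  | succ k ih =>
    intro ε hε
    set δ : ℝ := min (ε/3) 1 with hδdef
    have hδ : 0 < δ := lt_min (by linarith) one_pos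
    have hδε : (1+δ)*(1+δ) ≤ 1+ε := by
      have h1' : δ ≤ 1 := min_le_right _ _
      have h2' : δ ≤ ε/3 := min_le_left _ _
      nlinarith
    obtain ⟨C1, hC1, hC1'⟩ := hcard δ hδ
    obtain ⟨Ck, hCk, hCk'⟩ := ih δ hδ
    refine ⟨C1 * Ck ^ ((1:ℝ)+δ), by positivity, fun n => ?_⟩
    have h0 : (0:ℝ) ≤ c n := le_trans zero_le_one (h1 n)
    have hnn : (0:ℝ) ≤ c (n + k) := le_trans zero_le_one (h1 _)
    have step1 : c (n + (k+1)) ≤ C1 * c (n+k) ^ ((1:ℝ)+δ) := by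
      have := hC1' (n+k)
      rwa [show n + (k+1) = (n+k)+1 from by ring] at *
    calc c (n+(k+1)) ≤ C1 * c (n+k) ^ ((1:ℝ)+δ) := step1
    _ ≤ C1 * (Ck * c n ^ ((1:ℝ)+δ)) ^ ((1:ℝ)+δ) := by
        gcongr
        exact hCk' n
    _ = C1 * Ck ^ ((1:ℝ)+δ) * (c n ^ ((1:ℝ)+δ)) ^ ((1:ℝ)+δ) := by
        rw [Real.mul_rpow hCk.le (Real.rpow_nonneg h0 _)]; ring
    _ = C1 * Ck ^ ((1:ℝ)+δ) * c n ^ (((1:ℝ)+δ)*((1:ℝ)+δ)) := by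
        rw [Real.rpow_mul h0]
    _ ≤ C1 * Ck ^ ((1:ℝ)+δ) * c n ^ ((1:ℝ)+ε) := by
        exact mul_le_mul_of_nonneg_left
          (Real.rpow_le_rpow_of_exponent_le (h1 n) hδε) (by positivity)

/-- if an integral domain `O` admits a constrained filtration and
`a ∈ O` is nonzero, then the subring `O[a⁻¹]` of the fraction field of `O`
(generated by `O` together with `a⁻¹`) admits a constrained filtration. -/
theorem statement10 (O : Type*) [CommRing O] [IsDomain O]
    (a : O) (ha : a ≠ 0) (h : ConstrainedlyFiltered O) :
    ConstrainedlyFiltered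
      ↥(Algebra.adjoin O ({(algebraMap O (FractionRing O) a)⁻¹} : Set (FractionRing O))) := by
  obtain ⟨F, hfin, hmono, hcover, ⟨K, hK⟩, hmul, hcard⟩ := h
  have hle : ∀ {m n : ℕ}, m ≤ n → F m ⊆ F n := filt_mono_aux hmono
  set φ := algebraMap O (FractionRing O) with hφ
  have hφinj : Function.Injective φ := IsFractionRing.injective O (FractionRing O)
  have hu : φ a ≠ 0 := fun hh => ha (hφinj (by rw [hh, map_zero]))
  set A := Algebra.adjoin O ({(φ a)⁻¹} : Set (FractionRing O)) with hA
  have hvmem : (φ a)⁻¹ ∈ A := Algebra.subset_adjoin rfl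
  obtain ⟨ka, hka⟩ := hmul a
  set k := ka + 1 with hk
  have hmem : ∀ (x : O) (n : ℕ), φ x * ((φ a)⁻¹) ^ n ∈ A := fun x n =>
    mul_mem (A.algebraMap_mem x) (pow_mem hvmem n)
  set f : ℕ → O → ↥A := fun n x => ⟨φ x * ((φ a)⁻¹) ^ n, hmem x n⟩ with hf
  have finj : ∀ n, Function.Injective (f n) := by
    intro n x y hxy
    have h2 : φ x * ((φ a)⁻¹)^n = φ y * ((φ a)⁻¹)^n := congrArg Subtype.val hxy
    exact hφinj (mul_right_cancel₀ (pow_ne_zero n (inv_ne_zero hu)) h2)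
  have fsucc : ∀ n x, f n x = f (n+1) (a * x) := by
    intro n x
    apply Subtype.ext
    show φ x * ((φ a)⁻¹)^n = φ (a*x) * ((φ a)⁻¹)^(n+1)
    rw [map_mul, pow_succ]
    field_simp
  have fshift : ∀ n m x, f n x = f (n+m) (a^m * x) := by
    intro n m x
    induction m with
    | zero => simp
    | succ m ih =>
      rw [ih, fsucc]
      congr 1
      ring
  have fadd : ∀ n x y, f n x + f n y = f n (x + y) := by
    intro n x y
    apply Subtype.ext
    show φ x * ((φ a)⁻¹)^n + φ y * ((φ a)⁻¹)^n = φ (x+y) * ((φ a)⁻¹)^n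
    rw [map_add]; ring
  have fmul : ∀ m n c x, f m c * f n x = f (m+n) (c * x) := by
    intro m n c x
    apply Subtype.ext
    show (φ c * ((φ a)⁻¹)^m) * (φ x * ((φ a)⁻¹)^n) = φ (c*x) * ((φ a)⁻¹)^(m+n)
    rw [map_mul, pow_add]; ring
  have hpow : ∀ (m j : ℕ) (x : O), x ∈ F j → a^m * x ∈ F (j + m*ka) := by
    intro m
    induction m with
    | zero => intro j x hx; simpa using hx
    | succ m ih =>
      intro j x hx
      have h2 := hka (j + m*ka) (a^m * x) (ih j x hx)
      rw [show a^(m+1) * x = a * (a^m * x) from by ring,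
        show j + (m+1)*ka = j + m*ka + ka from by ring]
      exact h2
  have hrep : ∀ s : ↥A, ∃ m x, s = f m x := by
    rintro ⟨s, hs⟩
    have hx : ∃ (m : ℕ) (x : O), s = φ x * ((φ a)⁻¹)^m := by
      induction hs using Algebra.adjoin_induction with
      | mem y hy =>
        rw [Set.mem_singleton_iff] at hy
        exact ⟨1, 1, by simp [hy]⟩
      | algebraMap r => exact ⟨0, r, by simp; rfl⟩
      | add x y hx' hy' ihx ihy =>
        obtain ⟨m, c, rfl⟩ := ihx
        obtain ⟨l, d, rfl⟩ := ihy
        refine ⟨m + l, c * a^l + d * a^m, ?_⟩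
        have hc : ∀ t : ℕ, (φ a)^t * ((φ a)⁻¹)^t = 1 := fun t => by
          rw [← mul_pow, mul_inv_cancel₀ hu, one_pow]
        rw [map_add, map_mul, map_mul, map_pow, map_pow, pow_add]
        calc φ c * (φ a)⁻¹ ^ m + φ d * (φ a)⁻¹ ^ l
            = φ c * (φ a)⁻¹ ^ m * ((φ a) ^ l * (φ a)⁻¹ ^ l)
              + φ d * (φ a)⁻¹ ^ l * ((φ a) ^ m * (φ a)⁻¹ ^ m) := by rw [hc, hc]; ring
          _ = (φ c * φ a ^ l + φ d * φ a ^ m) * ((φ a)⁻¹ ^ m * (φ a)⁻¹ ^ l) := by ring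
      | mul x y hx' hy' ihx ihy =>
        obtain ⟨m, c, rfl⟩ := ihx
        obtain ⟨l, d, rfl⟩ := ihy
        exact ⟨m + l, c * d, by rw [map_mul, pow_add]; ring⟩
    obtain ⟨m, x, hx⟩ := hx
    exact ⟨m, x, Subtype.ext hx⟩
  refine ⟨fun n => f n '' F (k * n), fun n => ⟨(hfin _).1.image _, (hfin _).2.image _⟩,
    ?_, ?_, ?_, ?_, ?_⟩
  · -- monotone
    rintro n _ ⟨x, hx, rfl⟩
    refine ⟨a * x, ?_, (fsucc n x).symm⟩
    exact hle (by rw [Nat.mul_succ]; exact Nat.add_le_add_left (Nat.le_succ ka) _)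
      (hka (k*n) x hx)
  · -- covering
    intro s
    obtain ⟨m, x, rfl⟩ := hrep s
    obtain ⟨j, hj⟩ := hcover x
    refine ⟨m + j, a^j * x, ?_, (fshift m j x).symm⟩
    have e1 : j + j*ka = k*j := by rw [hk]; ring
    refine hle ?_ (hpow j j x hj)
    rw [e1]
    exact Nat.mul_le_mul le_rfl (Nat.le_add_left j m)
  · -- addition
    refine ⟨K, ?_⟩
    rintro n _ ⟨x, hx, rfl⟩ _ ⟨y, hy, rfl⟩
    refine ⟨a^K * (x + y), ?_, ?_⟩
    · have h2 := hpow K (k*n + K) (x+y) (hK (k*n) x hx y hy)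
      refine hle (Nat.le_of_eq ?_) h2
      rw [hk]; ring
    · rw [← fshift, fadd]
  · -- multiplication
    intro b
    obtain ⟨m, c, rfl⟩ := hrep b
    obtain ⟨kc, hkc⟩ := hmul c
    refine ⟨m + kc, ?_⟩
    rintro n _ ⟨x, hx, rfl⟩
    refine ⟨a^kc * (c * x), ?_, ?_⟩
    · have h2 := hpow kc (k*n + kc) (c*x) (hkc (k*n) x hx)
      refine hle ?_ h2
      have e1 : k*n + kc + kc*ka = k*n + k*kc := by rw [hk]; ring
      rw [e1, Nat.mul_add]
      exact Nat.add_le_add le_rfl (Nat.mul_le_mul le_rfl (Nat.le_add_left kc m))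
    · rw [fmul, show n + (m + kc) = (m + n) + kc from by omega]
      exact (fshift (m+n) kc (c*x)).symm
  · -- cardinality
    have h1 : ∀ n, (1:ℝ) ≤ ((F n).ncard : ℝ) := fun n =>
      Nat.one_le_cast.mpr ((Set.ncard_pos (hfin n).1).mpr (hfin n).2)
    intro ε hε
    obtain ⟨C, hC, hC'⟩ := card_iter_aux h1 hcard k ε hε
    refine ⟨C, hC, fun n => ?_⟩
    rw [Set.ncard_image_of_injective _ (finj _), Set.ncard_image_of_injective _ (finj _)]
    rw [Nat.mul_succ]
    exact hC' (k*n)
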